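/- In any Shapley cost sharing game, the function Φ(P) = Σ_{r ∈ R} Σ_{∅ ≠ T ⊆ P^r} α^r_T · C^r(T), where α^r_T = (|P^r| − |T|)! · (|T| − 1)! / |P^r|!, is an exact potential function: for every strategy vector P, every player i, and every alternative strategy Q_i ∈ 𝒫_i, Φ(P) − Φ(P_{−i}, Q_i) = C_i(P) − C_i(P_{−i}, Q_i). -/
import Mathlib


open Finset

def preSet {N : Type*} [DecidableEq N] (S : Finset N)
    (π : {x // x ∈ S} ≃ Fin S.card) (i : {x // x ∈ S}) : Finset N :=
  (S.attach.filter (fun j => π j < π i)).image Subtype.val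

noncomputable def shapley {N : Type*} [DecidableEq N]
    (C : Finset N → ℝ) (S : Finset N) (i : N) : ℝ :=
  if hi : i ∈ S then
    (1 / (Nat.factorial S.card : ℝ)) *
      ∑ π : {x // x ∈ S} ≃ Fin S.card,
        (C (preSet S π ⟨i, hi⟩ ∪ {i}) - C (preSet S π ⟨i, hi⟩))
  else 0

/-- `users P r = P^r = {i : r ∈ P_i}`, the set of players using resource `r`. -/
def users {n : ℕ} {R : Type*} [DecidableEq R]
    (P : Fin n → Finset R) (r : R) : Finset (Fin n) :=
  Finset.univ.filter (fun i => r ∈ P i)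

/-- The private cost of player `i` under Shapley cost sharing:
`C_i(P) = Σ_{r ∈ P_i} φ_i(C^r, P^r)`. -/
noncomputable def privCost {n : ℕ} {R : Type*} [DecidableEq R]
    (Cr : R → Finset (Fin n) → ℝ) (P : Fin n → Finset R) (i : Fin n) : ℝ :=
  ∑ r ∈ P i, shapley (Cr r) (users P r) i

/-- The social cost `C(P) = Σ_{r ∈ R} C^r(P^r)`. -/
noncomputable def socCost {n : ℕ} {R : Type*} [Fintype R] [DecidableEq R]
    (Cr : R → Finset (Fin n) → ℝ) (P : Fin n → Finset R) : ℝ :=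
  ∑ r : R, Cr r (users P r)

/-- The Shapley potential
`Φ(P) = Σ_{r ∈ R} Σ_{∅ ≠ T ⊆ P^r} ((|P^r|-|T|)!(|T|-1)!/|P^r|!) · C^r(T)`. -/
noncomputable def pot {n : ℕ} {R : Type*} [Fintype R] [DecidableEq R]
    (Cr : R → Finset (Fin n) → ℝ) (P : Fin n → Finset R) : ℝ :=
  ∑ r : R, ∑ T ∈ (users P r).powerset.filter (fun T => T.Nonempty),
    ((Nat.factorial ((users P r).card - T.card) : ℝ) *
        (Nat.factorial (T.card - 1) : ℝ) / (Nat.factorial (users P r).card : ℝ)) *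
      Cr r T

/-- `P` is a pure Nash equilibrium of the Shapley cost sharing game. -/
def isPNE {n : ℕ} {R : Type*} [DecidableEq R]
    (Strat : Fin n → Set (Finset R)) (Cr : R → Finset (Fin n) → ℝ)
    (P : Fin n → Finset R) : Prop :=
  (∀ i, P i ∈ Strat i) ∧
    ∀ i, ∀ Q ∈ Strat i, privCost Cr P i ≤ privCost Cr (Function.update P i Q) i

/-- `H_k`, the `k`-th harmonicNum number. -/
noncomputable def harmonicNum (k : ℕ) : ℝ := ∑ l ∈ Finset.Icc 1 k, (1 / (l : ℝ))

section Aux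
variable {N : Type*} [DecidableEq N]

lemma mem_preSet {S : Finset N} {π : {x // x ∈ S} ≃ Fin S.card} {i0 : {x // x ∈ S}} {x : N} :
    x ∈ preSet S π i0 ↔ ∃ hx : x ∈ S, π ⟨x, hx⟩ < π i0 := by
  simp [preSet]

lemma preSet_eq_iff {S : Finset N} {π : {x // x ∈ S} ≃ Fin S.card} {i0 : {x // x ∈ S}}
    {T : Finset N} (hT : T ⊆ S) :
    preSet S π i0 = T ↔ ∀ j : {x // x ∈ S}, (π j < π i0 ↔ (j : N) ∈ T) := by
  constructor
  · intro h j
    constructor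
    · intro hlt
      rw [← h]
      exact mem_preSet.mpr ⟨j.2, by simpa using hlt⟩
    · intro hj
      rw [← h] at hj
      obtain ⟨hx, hlt⟩ := mem_preSet.mp hj
      simpa using hlt
  · intro h
    ext x
    rw [mem_preSet]
    constructor
    · rintro ⟨hx, hlt⟩; exact (h ⟨x, hx⟩).mp hlt
    · intro hx; exact ⟨hT hx, (h ⟨x, hT hx⟩).mpr hx⟩

lemma pi_val_of_cond {S : Finset N} {π : {x // x ∈ S} ≃ Fin S.card} {i0 : {x // x ∈ S}}
    {T : Finset N} (hT : T ⊆ S)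
    (h : ∀ j : {x // x ∈ S}, (π j < π i0 ↔ (j : N) ∈ T)) :
    (π i0 : ℕ) = T.card := by
  have h1 : (univ.filter (fun j : {x // x ∈ S} => π j < π i0)).card = (π i0 : ℕ) := by
    have e1 : (univ.filter (fun j : {x // x ∈ S} => π j < π i0))
        = (univ.filter (fun v : Fin S.card => v < π i0)).map π.symm.toEmbedding := by
      ext j
      simp only [mem_filter, mem_univ, true_and, Finset.mem_map_equiv, Equiv.symm_symm]
    rw [e1, card_map]
    have : univ.filter (fun v : Fin S.card => v < π i0) = Finset.Iio (π i0) := by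
      ext x; simp
    rw [this, Fin.card_Iio]
  have h2 : (univ.filter (fun j : {x // x ∈ S} => π j < π i0)).card = T.card := by
    have e2 : univ.filter (fun j : {x // x ∈ S} => π j < π i0)
        = univ.filter (fun j : {x // x ∈ S} => (j : N) ∈ T) := by
      apply filter_congr; intro j _; simp [h j]
    rw [e2]
    rw [Finset.univ_eq_attach]
    have e3 : ((S.attach.filter (fun j : {x // x ∈ S} => (j : N) ∈ T)).image Subtype.val) = T := by
      ext x
      simp only [mem_image, mem_filter, mem_attach, true_and, Subtype.exists,
        exists_and_right, exists_eq_right]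
      exact ⟨fun ⟨_, hx⟩ => hx, fun hx => ⟨hT hx, hx⟩⟩
    calc (S.attach.filter (fun j : {x // x ∈ S} => (j : N) ∈ T)).card
        = ((S.attach.filter (fun j : {x // x ∈ S} => (j : N) ∈ T)).image Subtype.val).card := by
          rw [Finset.card_image_of_injective _ Subtype.val_injective]
      _ = T.card := by rw [e3]
  omega


def glue {S T : Finset N} {i : N}
    (hU : (S \ insert i T).card + T.card + 1 = S.card)
    (a : {x // x ∈ T} ≃ Fin T.card)
    (b : {x // x ∈ S \ insert i T} ≃ Fin (S \ insert i T).card)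
    (j : {x // x ∈ S}) : Fin S.card :=
  if hj : (j : N) ∈ T then
    ⟨(a ⟨j.1, hj⟩ : ℕ), by have := (a ⟨j.1, hj⟩).2; omega⟩
  else if hji : (j : N) = i then ⟨T.card, by omega⟩
  else
    ⟨(b ⟨j.1, Finset.mem_sdiff.mpr ⟨j.2, by simp [hj, hji]⟩⟩ : ℕ) + T.card + 1, by
      have := (b ⟨j.1, Finset.mem_sdiff.mpr ⟨j.2, by simp [hj, hji]⟩⟩).2; omega⟩

lemma glue_val_mem {S T : Finset N} {i : N}
    (hU : (S \ insert i T).card + T.card + 1 = S.card)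
    (a : {x // x ∈ T} ≃ Fin T.card)
    (b : {x // x ∈ S \ insert i T} ≃ Fin (S \ insert i T).card)
    {j : {x // x ∈ S}} (hj : (j : N) ∈ T) :
    (glue hU a b j : ℕ) = (a ⟨j.1, hj⟩ : ℕ) := by
  rw [glue, dif_pos hj]

lemma glue_val_i {S T : Finset N} {i : N}
    (hU : (S \ insert i T).card + T.card + 1 = S.card)
    (a : {x // x ∈ T} ≃ Fin T.card)
    (b : {x // x ∈ S \ insert i T} ≃ Fin (S \ insert i T).card)
    {j : {x // x ∈ S}} (h1 : (j : N) ∉ T) (h2 : (j : N) = i) :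
    (glue hU a b j : ℕ) = T.card := by
  rw [glue, dif_neg h1, dif_pos h2]

lemma glue_val_other {S T : Finset N} {i : N}
    (hU : (S \ insert i T).card + T.card + 1 = S.card)
    (a : {x // x ∈ T} ≃ Fin T.card)
    (b : {x // x ∈ S \ insert i T} ≃ Fin (S \ insert i T).card)
    {j : {x // x ∈ S}} (h1 : (j : N) ∉ T) (h2 : (j : N) ≠ i)
    (hjU : (j : N) ∈ S \ insert i T) :
    (glue hU a b j : ℕ) = (b ⟨j.1, hjU⟩ : ℕ) + T.card + 1 := by
  rw [glue, dif_neg h1, dif_neg h2]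

lemma glue_inj {S T : Finset N} {i : N}
    (hU : (S \ insert i T).card + T.card + 1 = S.card)
    (a : {x // x ∈ T} ≃ Fin T.card)
    (b : {x // x ∈ S \ insert i T} ≃ Fin (S \ insert i T).card) :
    Function.Injective (glue hU a b) := by
  intro x y h
  have hv := congrArg Fin.val h
  by_cases hx1 : (x : N) ∈ T <;> by_cases hy1 : (y : N) ∈ T
  · rw [glue_val_mem hU a b hx1, glue_val_mem hU a b hy1] at hv
    have := a.injective (Fin.ext hv)
    have h6 := congrArg Subtype.val this
    exact Subtype.ext h6
  · exfalso
    rw [glue_val_mem hU a b hx1] at hv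
    have hva := (a ⟨x.1, hx1⟩).2
    by_cases hy2 : (y : N) = i
    · rw [glue_val_i hU a b hy1 hy2] at hv; omega
    · have hyU : (y : N) ∈ S \ insert i T := mem_sdiff.mpr ⟨y.2, by simp [hy1, hy2]⟩
      rw [glue_val_other hU a b hy1 hy2 hyU] at hv; omega
  · exfalso
    rw [glue_val_mem hU a b hy1] at hv
    have hva := (a ⟨y.1, hy1⟩).2
    by_cases hx2 : (x : N) = i
    · rw [glue_val_i hU a b hx1 hx2] at hv; omega
    · have hxU : (x : N) ∈ S \ insert i T := mem_sdiff.mpr ⟨x.2, by simp [hx1, hx2]⟩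
      rw [glue_val_other hU a b hx1 hx2 hxU] at hv; omega
  · by_cases hx2 : (x : N) = i <;> by_cases hy2 : (y : N) = i
    · exact Subtype.ext (hx2.trans hy2.symm)
    · exfalso
      have hyU : (y : N) ∈ S \ insert i T := mem_sdiff.mpr ⟨y.2, by simp [hy1, hy2]⟩
      rw [glue_val_i hU a b hx1 hx2, glue_val_other hU a b hy1 hy2 hyU] at hv; omega
    · exfalso
      have hxU : (x : N) ∈ S \ insert i T := mem_sdiff.mpr ⟨x.2, by simp [hx1, hx2]⟩
      rw [glue_val_other hU a b hx1 hx2 hxU, glue_val_i hU a b hy1 hy2] at hv; omega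
    · have hxU : (x : N) ∈ S \ insert i T := mem_sdiff.mpr ⟨x.2, by simp [hx1, hx2]⟩
      have hyU : (y : N) ∈ S \ insert i T := mem_sdiff.mpr ⟨y.2, by simp [hy1, hy2]⟩
      rw [glue_val_other hU a b hx1 hx2 hxU, glue_val_other hU a b hy1 hy2 hyU] at hv
      have : (b ⟨x.1, hxU⟩ : ℕ) = (b ⟨y.1, hyU⟩ : ℕ) := by omega
      have h5 := b.injective (Fin.ext this)
      have h6 := congrArg Subtype.val h5
      exact Subtype.ext h6

lemma glue_bij {S T : Finset N} {i : N}
    (hU : (S \ insert i T).card + T.card + 1 = S.card)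
    (a : {x // x ∈ T} ≃ Fin T.card)
    (b : {x // x ∈ S \ insert i T} ≃ Fin (S \ insert i T).card) :
    Function.Bijective (glue hU a b) :=
  (Fintype.bijective_iff_injective_and_card _).mpr ⟨glue_inj hU a b, by simp⟩

lemma fiber_card {S : Finset N} {i : N} (hi : i ∈ S) {T : Finset N} (hT : T ⊆ S.erase i) :
    Fintype.card {π : {x // x ∈ S} ≃ Fin S.card // preSet S π ⟨i, hi⟩ = T}
      = T.card.factorial * (S.card - 1 - T.card).factorial := by
  classical
  obtain ⟨hTS, hiT⟩ := subset_erase.mp hT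
  set s := S.card with hs
  set t := T.card with ht
  set U := S \ insert i T with hUdef
  have hins : insert i T ⊆ S := insert_subset hi hTS
  have hcins : (insert i T).card = t + 1 := by rw [card_insert_of_notMem hiT]
  have hts : t + 1 ≤ s := hcins ▸ card_le_card hins
  have hUcard : U.card = s - 1 - t := by
    rw [hUdef, card_sdiff_of_subset hins, hcins]; omega
  have hUS : U ⊆ S := sdiff_subset
  -- cardinality of the product type
  have hprod : Fintype.card (({x // x ∈ T} ≃ Fin t) × ({x // x ∈ U} ≃ Fin U.card))
      = t.factorial * (s - 1 - t).factorial := by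
    rw [Fintype.card_prod,
      Fintype.card_equiv (Fintype.equivFinOfCardEq (by simp [ht])),
      Fintype.card_equiv (Fintype.equivFinOfCardEq (by simp)),
      Fintype.card_coe, Fintype.card_coe, hUcard]
  rw [← hprod]
  -- key facts about members of the fiber
  have key1 : ∀ p : {π : {x // x ∈ S} ≃ Fin S.card // preSet S π ⟨i, hi⟩ = T},
      ∀ j : {x // x ∈ S}, ((p.1 j : ℕ) < t ↔ (j : N) ∈ T) := by
    intro p j
    have cond := (preSet_eq_iff hTS).mp p.2
    have hpi := pi_val_of_cond hTS cond
    rw [← ht] at hpi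
    rw [← hpi]
    exact (Fin.lt_def.symm).trans (cond j)
  have key2 : ∀ p : {π : {x // x ∈ S} ≃ Fin S.card // preSet S π ⟨i, hi⟩ = T},
      (p.1 ⟨i, hi⟩ : ℕ) = t := by
    intro p
    have cond := (preSet_eq_iff hTS).mp p.2
    have := pi_val_of_cond hTS cond
    omega
  have key3 : ∀ p : {π : {x // x ∈ S} ≃ Fin S.card // preSet S π ⟨i, hi⟩ = T},
      ∀ j : {x // x ∈ S}, (j : N) ∈ U → t + 1 ≤ (p.1 j : ℕ) := by
    intro p j hj
    obtain ⟨hjS, hjni⟩ := mem_sdiff.mp hj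
    simp only [mem_insert, not_or] at hjni
    have h1 : ¬ ((p.1 j : ℕ) < t) := by rw [key1 p j]; exact hjni.2
    have h2 : (p.1 j : ℕ) ≠ t := by
      intro hc
      have : p.1 j = p.1 ⟨i, hi⟩ := Fin.ext (by rw [hc, key2 p])
      exact hjni.1 (congrArg Subtype.val (p.1.injective this))
    omega
  apply le_antisymm
  · -- injection from the fiber into the product
    apply Fintype.card_le_of_injective
      (fun p =>
        (Equiv.ofBijective
          (fun j : {x // x ∈ T} =>
            (⟨(p.1 ⟨j.1, hTS j.2⟩ : ℕ), (key1 p ⟨j.1, hTS j.2⟩).mpr j.2⟩ : Fin t))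
          (by
            rw [Fintype.bijective_iff_injective_and_card]
            constructor
            · intro x y hxy
              simp only [Fin.mk.injEq] at hxy
              have h5 := p.1.injective (Fin.ext hxy)
              have h6 := congrArg Subtype.val h5
              exact Subtype.ext h6
            · simp [ht]),
        Equiv.ofBijective
          (fun j : {x // x ∈ U} =>
            (⟨(p.1 ⟨j.1, hUS j.2⟩ : ℕ) - (t + 1), by
              have h3 := key3 p ⟨j.1, hUS j.2⟩ j.2
              have h4 := (p.1 ⟨j.1, hUS j.2⟩).2
              omega⟩ : Fin U.card))
          (by
            rw [Fintype.bijective_iff_injective_and_card]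
            constructor
            · intro x y hxy
              simp only [Fin.mk.injEq] at hxy
              have h3 := key3 p ⟨x.1, hUS x.2⟩ x.2
              have h4 := key3 p ⟨y.1, hUS y.2⟩ y.2
              have hv2 : ((p.1 ⟨x.1, hUS x.2⟩ : Fin s) : ℕ) = ((p.1 ⟨y.1, hUS y.2⟩ : Fin s) : ℕ) := by
                omega
              have h5 := p.1.injective (Fin.ext hv2)
              have h6 := congrArg Subtype.val h5
              exact Subtype.ext h6
            · simp)))
    intro p q h
    have h1 := congrArg Prod.fst h
    have h2 := congrArg Prod.snd h
    simp only at h1 h2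
    apply Subtype.ext
    apply Equiv.ext
    intro j
    by_cases hjT : (j : N) ∈ T
    · have := DFunLike.congr_fun h1 ⟨j.1, hjT⟩
      have hv := congrArg Fin.val this
      simp only [Equiv.ofBijective_apply] at hv
      have hje : (⟨j.1, hTS hjT⟩ : {x // x ∈ S}) = j := Subtype.ext rfl
      rw [hje] at hv
      exact Fin.ext hv
    · by_cases hji : (j : N) = i
      · have hje : j = ⟨i, hi⟩ := Subtype.ext hji
        rw [hje]
        exact Fin.ext (by rw [key2 p, key2 q])
      · have hjU : (j : N) ∈ U := by
          rw [hUdef, mem_sdiff]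
          exact ⟨j.2, by simp [hji, hjT]⟩
        have := DFunLike.congr_fun h2 ⟨j.1, hjU⟩
        have hv := congrArg Fin.val this
        simp only [Equiv.ofBijective_apply] at hv
        have hje : (⟨j.1, hUS hjU⟩ : {x // x ∈ S}) = j := Subtype.ext rfl
        rw [hje] at hv
        have h3 := key3 p j hjU
        have h4 := key3 q j hjU
        exact Fin.ext (by omega)
  · -- injection from the product into the fiber
    have hUc : (S \ insert i T).card + T.card + 1 = S.card := by
      rw [← hUdef, ← ht, ← hs]; omega
    apply Fintype.card_le_of_injective (fun ab =>
      (⟨Equiv.ofBijective (glue hUc ab.1 ab.2) (glue_bij hUc ab.1 ab.2), by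
        apply (preSet_eq_iff hTS).mpr
        intro j
        rw [Equiv.ofBijective_apply, Equiv.ofBijective_apply, Fin.lt_def]
        have hvi : (glue hUc ab.1 ab.2 ⟨i, hi⟩ : ℕ) = T.card :=
          glue_val_i hUc ab.1 ab.2 hiT rfl
        rw [hvi]
        by_cases hj : (j : N) ∈ T
        · rw [glue_val_mem hUc ab.1 ab.2 hj]
          simp only [hj, iff_true]
          exact (ab.1 ⟨j.1, hj⟩).isLt
        · by_cases hji : (j : N) = i
          · rw [glue_val_i hUc ab.1 ab.2 hj hji]
            simp [hj]
          · have hjU : (j : N) ∈ S \ insert i T :=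
              mem_sdiff.mpr ⟨j.2, by simp [hj, hji]⟩
            rw [glue_val_other hUc ab.1 ab.2 hj hji hjU]
            simp only [hj, iff_false]
            omega⟩ :
        {π : {x // x ∈ S} ≃ Fin S.card // preSet S π ⟨i, hi⟩ = T}))
    intro p q h
    simp only [Subtype.mk.injEq] at h
    have hfv : ∀ j : {x // x ∈ S},
        (glue hUc p.1 p.2 j : ℕ) = (glue hUc q.1 q.2 j : ℕ) := by
      intro j
      have h0 := DFunLike.congr_fun h j
      simpa using congrArg Fin.val h0
    apply Prod.ext
    · apply Equiv.ext
      intro x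
      have hx := hfv ⟨x.1, hTS x.2⟩
      rw [glue_val_mem hUc p.1 p.2 x.2, glue_val_mem hUc q.1 q.2 x.2] at hx
      exact Fin.ext hx
    · apply Equiv.ext
      intro x
      obtain ⟨hxS, hxni⟩ := mem_sdiff.mp x.2
      simp only [mem_insert, not_or] at hxni
      have hx := hfv ⟨x.1, hxS⟩
      rw [glue_val_other hUc p.1 p.2 hxni.2 hxni.1 x.2,
        glue_val_other hUc q.1 q.2 hxni.2 hxni.1 x.2] at hx
      simp only [Subtype.coe_eta] at hx
      exact Fin.ext (by omega)

lemma shapley_eq_sum (C : Finset N → ℝ) (S : Finset N) {i : N} (hi : i ∈ S) :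
    shapley C S i = ∑ T ∈ (S.erase i).powerset,
      ((T.card.factorial : ℝ) * ((S.card - 1 - T.card).factorial : ℝ) / (S.card.factorial : ℝ)) *
        (C (insert i T) - C T) := by
  classical
  rw [shapley, dif_pos hi]
  have hmaps : ∀ π ∈ (univ : Finset ({x // x ∈ S} ≃ Fin S.card)),
      preSet S π ⟨i, hi⟩ ∈ (S.erase i).powerset := by
    intro π _
    rw [mem_powerset]
    intro x hx
    obtain ⟨hxS, hlt⟩ := mem_preSet.mp hx
    rw [mem_erase]
    refine ⟨?_, hxS⟩
    intro hxi
    have hxe : (⟨x, hxS⟩ : {x // x ∈ S}) = ⟨i, hi⟩ := Subtype.ext hxi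
    rw [hxe] at hlt
    exact lt_irrefl _ hlt
  rw [← Finset.sum_fiberwise_of_maps_to hmaps
    (fun π => C (preSet S π ⟨i, hi⟩ ∪ {i}) - C (preSet S π ⟨i, hi⟩)), Finset.mul_sum]
  apply Finset.sum_congr rfl
  intro T hT
  rw [mem_powerset] at hT
  have hconst : ∀ π ∈ univ.filter (fun π : {x // x ∈ S} ≃ Fin S.card =>
      preSet S π ⟨i, hi⟩ = T),
      C (preSet S π ⟨i, hi⟩ ∪ {i}) - C (preSet S π ⟨i, hi⟩) = C (insert i T) - C T := by
    intro π hπ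
    rw [(mem_filter.mp hπ).2]
    congr 1
    · congr 1
      ext x; simp [or_comm]
  rw [Finset.sum_congr rfl hconst, Finset.sum_const]
  have hcard : (univ.filter (fun π : {x // x ∈ S} ≃ Fin S.card =>
      preSet S π ⟨i, hi⟩ = T)).card
      = T.card.factorial * (S.card - 1 - T.card).factorial := by
    rw [← Fintype.card_subtype]
    exact fiber_card hi hT
  rw [hcard, nsmul_eq_mul]
  push_cast
  ring

lemma wrec (m t : ℕ) (h1 : 1 ≤ t) (h2 : t ≤ m) :
    ((Nat.factorial (m - t) : ℝ) * (Nat.factorial (t - 1)) / (Nat.factorial m))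
      = ((Nat.factorial (m + 1 - t) : ℝ) * (Nat.factorial (t - 1)) / (Nat.factorial (m + 1)))
      + ((Nat.factorial (m + 1 - (t + 1)) : ℝ) * (Nat.factorial ((t + 1) - 1)) /
          (Nat.factorial (m + 1))) := by
  obtain ⟨k, rfl⟩ : ∃ k, t = k + 1 := ⟨t - 1, by omega⟩
  obtain ⟨a, rfl⟩ : ∃ a, m = k + 1 + a := ⟨m - (k + 1), by omega⟩
  have e1 : k + 1 + a - (k + 1) = a := by omega
  have e2 : k + 1 + a + 1 - (k + 1) = a + 1 := by omega
  have e3 : k + 1 + a + 1 - (k + 1 + 1) = a := by omega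
  have e4 : k + 1 - 1 = k := by omega
  have e5 : k + 1 + 1 - 1 = k + 1 := by omega
  rw [e1, e2, e3, e4, e5]
  have f1 : ((k + 1 + a).factorial : ℝ) ≠ 0 := by
    exact_mod_cast (Nat.factorial_ne_zero _)
  have f2 : ((k + 1 + a + 1).factorial : ℝ) ≠ 0 := by
    exact_mod_cast (Nat.factorial_ne_zero _)
  rw [show k + 1 + a + 1 = (k + 1 + a) + 1 from rfl, Nat.factorial_succ (k + 1 + a),
    Nat.factorial_succ a, Nat.factorial_succ k]
  push_cast
  field_simp
  ring

lemma pot_diff (C : Finset N → ℝ) (hC0 : C ∅ = 0) {S : Finset N} {i : N} (hi : i ∈ S) :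
    (∑ T ∈ S.powerset.filter (fun T => T.Nonempty),
        ((Nat.factorial (S.card - T.card) : ℝ) * (Nat.factorial (T.card - 1) : ℝ) /
          (Nat.factorial S.card : ℝ)) * C T)
      - (∑ T ∈ (S.erase i).powerset.filter (fun T => T.Nonempty),
        ((Nat.factorial ((S.erase i).card - T.card) : ℝ) * (Nat.factorial (T.card - 1) : ℝ) /
          (Nat.factorial (S.erase i).card : ℝ)) * C T)
      = shapley C S i := by
  classical
  have hs1 : 1 ≤ S.card := Finset.card_pos.mpr ⟨i, hi⟩
  have hm : (S.erase i).card = S.card - 1 := card_erase_of_mem hi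
  have hsm : S.card = (S.erase i).card + 1 := by omega
  -- split the first sum according to whether `i ∈ T`
  have hsplit := Finset.sum_filter_add_sum_filter_not
    (S.powerset.filter (fun T => T.Nonempty)) (fun T => i ∈ T)
    (fun T => ((Nat.factorial (S.card - T.card) : ℝ) * (Nat.factorial (T.card - 1) : ℝ) /
      (Nat.factorial S.card : ℝ)) * C T)
  have hsplitset : (S.powerset.filter (fun T => T.Nonempty)).filter (fun T => ¬ i ∈ T)
      = (S.erase i).powerset.filter (fun T => T.Nonempty) := by
    ext T
    simp only [mem_filter, mem_powerset, subset_erase]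
    tauto
  -- reindex the `i ∈ T` part by `T ↦ T.erase i`
  have hbij : ∑ T ∈ (S.powerset.filter (fun T => T.Nonempty)).filter (fun T => i ∈ T),
      ((Nat.factorial (S.card - T.card) : ℝ) * (Nat.factorial (T.card - 1) : ℝ) /
          (Nat.factorial S.card : ℝ)) * C T
      = ∑ T ∈ (S.erase i).powerset,
        ((Nat.factorial (S.card - (T.card + 1)) : ℝ) * (Nat.factorial T.card : ℝ) /
          (Nat.factorial S.card : ℝ)) * C (insert i T) := by
    refine Finset.sum_bij' (fun T _ => T.erase i) (fun T _ => insert i T)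
      ?_ ?_ ?_ ?_ ?_
    · intro T hT
      simp only [mem_filter, mem_powerset] at hT
      exact mem_powerset.mpr (erase_subset_erase i hT.1.1)
    · intro T hT
      simp only [mem_powerset, subset_erase] at hT
      simp only [mem_filter, mem_powerset]
      exact ⟨⟨insert_subset hi hT.1, insert_nonempty i T⟩, mem_insert_self i T⟩
    · intro T hT
      simp only [mem_filter] at hT
      exact insert_erase hT.2
    · intro T hT
      simp only [mem_powerset, subset_erase] at hT
      exact erase_insert hT.2
    · intro T hT
      simp only [mem_filter] at hT
      have hiT := hT.2
      have hc : (T.erase i).card = T.card - 1 := card_erase_of_mem hiT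
      have hc1 : 1 ≤ T.card := card_pos.mpr ⟨i, hiT⟩
      rw [insert_erase hiT, hc]
      have he : T.card - 1 + 1 = T.card := by omega
      rw [he]
  -- rewrite the subtracted sum using the factorial recursion
  have hstep2 : ∑ T ∈ (S.erase i).powerset.filter (fun T => T.Nonempty),
      ((Nat.factorial ((S.erase i).card - T.card) : ℝ) * (Nat.factorial (T.card - 1) : ℝ) /
          (Nat.factorial (S.erase i).card : ℝ)) * C T
      = (∑ T ∈ (S.erase i).powerset.filter (fun T => T.Nonempty),
          ((Nat.factorial (S.card - T.card) : ℝ) * (Nat.factorial (T.card - 1) : ℝ) /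
            (Nat.factorial S.card : ℝ)) * C T)
        + ∑ T ∈ (S.erase i).powerset.filter (fun T => T.Nonempty),
          ((Nat.factorial (S.card - (T.card + 1)) : ℝ) * (Nat.factorial ((T.card + 1) - 1) : ℝ) /
            (Nat.factorial S.card : ℝ)) * C T := by
    rw [← Finset.sum_add_distrib]
    apply Finset.sum_congr rfl
    intro T hT
    simp only [mem_filter, mem_powerset] at hT
    have h1 : 1 ≤ T.card := card_pos.mpr hT.2
    have h2 : T.card ≤ (S.erase i).card := card_le_card hT.1
    rw [hsm, ← add_mul, ← wrec (S.erase i).card T.card h1 h2]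
  -- extend the second part of `hstep2` to the full powerset (empty set contributes 0)
  have hstep3 : ∑ T ∈ (S.erase i).powerset.filter (fun T => T.Nonempty),
      ((Nat.factorial (S.card - (T.card + 1)) : ℝ) * (Nat.factorial ((T.card + 1) - 1) : ℝ) /
        (Nat.factorial S.card : ℝ)) * C T
      = ∑ T ∈ (S.erase i).powerset,
        ((Nat.factorial (S.card - (T.card + 1)) : ℝ) * (Nat.factorial ((T.card + 1) - 1) : ℝ) /
          (Nat.factorial S.card : ℝ)) * C T := by
    apply Finset.sum_subset (filter_subset _ _)
    intro T hT hT2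
    have hTe : T = ∅ := by
      by_contra hne
      exact hT2 (mem_filter.mpr ⟨hT, Finset.nonempty_iff_ne_empty.mpr hne⟩)
    rw [hTe, hC0, mul_zero]
  -- final reindexed difference equals the Shapley value
  have hfinal : (∑ T ∈ (S.erase i).powerset,
        ((Nat.factorial (S.card - (T.card + 1)) : ℝ) * (Nat.factorial T.card : ℝ) /
          (Nat.factorial S.card : ℝ)) * C (insert i T))
      - (∑ T ∈ (S.erase i).powerset,
        ((Nat.factorial (S.card - (T.card + 1)) : ℝ) * (Nat.factorial ((T.card + 1) - 1) : ℝ) /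
          (Nat.factorial S.card : ℝ)) * C T)
      = shapley C S i := by
    rw [← Finset.sum_sub_distrib, shapley_eq_sum C S hi]
    apply Finset.sum_congr rfl
    intro T hT
    have h2 : S.card - (T.card + 1) = S.card - 1 - T.card := by omega
    rw [h2]
    simp only [Nat.add_sub_cancel]
    ring
  rw [hsplitset] at hsplit
  linarith [hsplit, hbij, hstep2, hstep3, hfinal]

end Aux

/-- The Shapley potential is an exact potential function. -/
theorem shapley_exact_potential {n : ℕ} {R : Type*} [Fintype R] [DecidableEq R]
    (Strat : Fin n → Set (Finset R)) (Cr : R → Finset (Fin n) → ℝ)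
    (hC0 : ∀ r, Cr r ∅ = 0)
    (P : Fin n → Finset R) (hP : ∀ i, P i ∈ Strat i)
    (i : Fin n) (Q : Finset R) (hQ : Q ∈ Strat i) :
    pot Cr P - pot Cr (Function.update P i Q) =
      privCost Cr P i - privCost Cr (Function.update P i Q) i := by
  classical
  rw [pot, pot, privCost, privCost]
  have hPQ : Function.update P i Q i = Q := Function.update_self i Q P
  rw [hPQ]
  have h1 : ∀ (Pv : Fin n → Finset R) (B : Finset R),
      ∑ r ∈ B, shapley (Cr r) (users Pv r) i
        = ∑ r : R, (if r ∈ B then shapley (Cr r) (users Pv r) i else 0) := by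
    intro Pv B
    rw [← Finset.sum_filter]
    apply Finset.sum_congr
    · ext r; simp
    · intros; rfl
  rw [h1 P (P i), h1 (Function.update P i Q) Q,
    ← Finset.sum_sub_distrib, ← Finset.sum_sub_distrib]
  apply Finset.sum_congr rfl
  intro r _
  by_cases hp : r ∈ P i <;> by_cases hq : r ∈ Q
  · have he : users (Function.update P i Q) r = users P r := by
      ext j
      by_cases hj : j = i <;> simp [users, Function.update_apply, hj, hp, hq]
    rw [he]
    simp [hp, hq]
  · have he : users (Function.update P i Q) r = (users P r).erase i := by
      ext j
      by_cases hj : j = i <;> simp [users, Function.update_apply, hj, hq]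
    have hiu : i ∈ users P r := by simp [users, hp]
    rw [he]
    simp only [hp, if_true, hq, if_false, sub_zero]
    exact pot_diff (Cr r) (hC0 r) hiu
  · have he : users P r = (users (Function.update P i Q) r).erase i := by
      ext j
      by_cases hj : j = i <;> simp [users, Function.update_apply, hj, hp]
    have hiu : i ∈ users (Function.update P i Q) r := by
      simp [users, Function.update_self, hq]
    rw [he]
    simp only [hp, if_false, hq, if_true, zero_sub]
    have := pot_diff (Cr r) (hC0 r) hiu
    linarith
  · have he : users (Function.update P i Q) r = users P r := by
      ext j
      by_cases hj : j = i <;> simp [users, Function.update_apply, hj, hp, hq]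
    rw [he]
    simp [hp, hq]
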